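/- Let (A, ρ̄) be a partial H-comodule algebra. Regard A ⊗ H as an H-comodule algebra with coaction δ = I ⊗ Δ, and let B be the smallest H-subcomodule subalgebra of A ⊗ H containing ρ̄(A). Then ρ̄(1_A) · B ⊆ ρ̄(A); consequently ρ̄(A) is a right ideal of B whose unity is the idempotent ρ̄(1_A). -/

import Mathlib

set_option maxHeartbeats 1000000
set_option synthInstance.maxHeartbeats 200000

/-!
STATEMENT 10: Let `(A, ρ̄)` be a partial `H`-comodule algebra and `B` the smallest
`H`-subcomodule subalgebra of `(A ⊗ H, δ = I ⊗ Δ)` containing `ρ̄(A)`.  Then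
`ρ̄(1_A) B ⊆ ρ̄(A)`; consequently `ρ̄(A)` is a right ideal of `B` whose unity is the
idempotent `ρ̄(1_A)`.
-/

open TensorProduct

/-- The axioms of a (right) partial coaction `ρ : A → A ⊗ H` of a Hopf algebra `H` on a
unital algebra `A`. -/
structure IsPartialCoaction (k : Type*) [Field k] (H A : Type*) [Ring H] [HopfAlgebra k H]
    [Ring A] [Algebra k A] (ρ : A →ₗ[k] A ⊗[k] H) : Prop where
  map_mul : ∀ a b : A, ρ (a * b) = ρ a * ρ b
  counit_id : ∀ a : A,
    (TensorProduct.rid k A) ((LinearMap.lTensor A Coalgebra.counit) (ρ a)) = a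
  coassoc : ∀ a : A,
    (LinearMap.rTensor H ρ) (ρ a) =
      (ρ 1 ⊗ₜ[k] (1 : H)) *
        ((TensorProduct.assoc k A H H).symm ((LinearMap.lTensor A Coalgebra.comul) (ρ a)))

noncomputable section

variable (k : Type*) [Field k] (H A : Type*) [Ring H] [HopfAlgebra k H] [Ring A] [Algebra k A]

/-- The coaction `δ = I ⊗ Δ` making `A ⊗ H` an `H`-comodule algebra. -/
def trivialCoaction : A ⊗[k] H →ₗ[k] (A ⊗[k] H) ⊗[k] H :=
  (TensorProduct.assoc k A H H).symm.toLinearMap ∘ₗ LinearMap.lTensor A Coalgebra.comul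

/-- A non-unital subalgebra `W` of the `H`-comodule algebra `(A ⊗ H, δ = I ⊗ Δ)` is an
`H`-subcomodule subalgebra when `δ(W) ⊆ W ⊗ H`. -/
def IsSubcomoduleSubalg (W : NonUnitalSubalgebra k (A ⊗[k] H)) : Prop :=
  ∀ w ∈ W, trivialCoaction k H A w ∈
    LinearMap.range (LinearMap.rTensor H (Submodule.subtype W.toSubmodule))

section Aux10

open LinearMap

namespace Aux10

local instance : DecidableEq (Module.Basis.ofVectorSpaceIndex k H) := Classical.decEq _

/-- A fixed basis of `H`. -/
noncomputable def bH : Module.Basis (Module.Basis.ofVectorSpaceIndex k H) k H := Module.Basis.ofVectorSpace k H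

/-- `M ⊗ H` is a direct sum of copies of `M` indexed by a basis of `H`. -/
noncomputable def eqv (M : Type*) [AddCommGroup M] [Module k M] :
    M ⊗[k] H ≃ₗ[k] (Module.Basis.ofVectorSpaceIndex k H →₀ M) :=
  (TensorProduct.congr (LinearEquiv.refl k M) (bH k H).repr).trans
    (TensorProduct.finsuppScalarRight k k M _)

/-- The `i`-th coordinate map `M ⊗ H → M`. -/
noncomputable def cd (M : Type*) [AddCommGroup M] [Module k M]
    (i : Module.Basis.ofVectorSpaceIndex k H) : M ⊗[k] H →ₗ[k] M :=
  (Finsupp.lapply i) ∘ₗ (eqv k H M).toLinearMap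

/-- The map `h ↦ (I ⊗ coordᵢ)(Δ h)`. -/
noncomputable def Dk (i : Module.Basis.ofVectorSpaceIndex k H) : H →ₗ[k] H :=
  cd k H H i ∘ₗ Coalgebra.comul

variable {k H}
variable {M : Type*} [AddCommGroup M] [Module k M]

lemma cd_tmul (i) (m : M) (h : H) : cd k H M i (m ⊗ₜ[k] h) = (bH k H).repr h i • m := by
  simp [cd, eqv]

lemma eqv_symm_single (i) (m : M) :
    (eqv k H M).symm (Finsupp.single i m) = m ⊗ₜ[k] (bH k H) i := by
  rw [LinearEquiv.symm_apply_eq]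
  ext j
  simp [eqv, Finsupp.single_apply]

lemma eqv_symm_eq (l : Module.Basis.ofVectorSpaceIndex k H →₀ M) :
    (eqv k H M).symm l = l.sum fun i m => m ⊗ₜ[k] (bH k H) i := by
  conv_lhs => rw [← Finsupp.sum_single l]
  rw [map_finsuppSum]
  exact Finsupp.sum_congr fun i _ => eqv_symm_single i _

lemma repr_sum (x : M ⊗[k] H) :
    x = (eqv k H M x).sum fun i m => m ⊗ₜ[k] (bH k H) i := by
  conv_lhs => rw [← (eqv k H M).symm_apply_apply x]
  exact eqv_symm_eq _

lemma cd_natural {N : Type*} [AddCommGroup N] [Module k N] (f : N →ₗ[k] M) (i)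
    (y : N ⊗[k] H) : cd k H M i (rTensor H f y) = f (cd k H N i y) := by
  have : (cd k H M i) ∘ₗ rTensor H f = f ∘ₗ cd k H N i := by
    apply TensorProduct.ext'
    intro n h
    simp [cd_tmul, map_smul]
  exact DFunLike.congr_fun this y

lemma mem_range_rTensor_subtype_iff (p : Submodule k M) (x : M ⊗[k] H) :
    x ∈ LinearMap.range (rTensor H p.subtype) ↔ ∀ i, cd k H M i x ∈ p := by
  constructor
  · rintro ⟨y, rfl⟩ i
    rw [cd_natural]
    exact (cd k H p i y).2
  · intro hx
    rw [repr_sum x]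
    apply Submodule.sum_mem
    intro i _
    exact ⟨(⟨eqv k H M x i, hx i⟩ : p) ⊗ₜ[k] (bH k H) i, by simp⟩

lemma lTensor_cd_assoc (i) (y : H ⊗[k] H) (v : H) :
    lTensor H (cd k H H i) ((TensorProduct.assoc k H H H) (y ⊗ₜ[k] v)) =
      (bH k H).repr v i • y := by
  induction y using TensorProduct.induction_on with
  | zero => simp
  | tmul p q => simp [cd_tmul, smul_tmul', tmul_smul]
  | add y₁ y₂ h₁ h₂ => simp only [add_tmul, map_add, h₁, h₂, smul_add]

lemma comul_comp_cd_comul (i) :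
    (Coalgebra.comul (R := k) (A := H)) ∘ₗ cd k H H i =
      lTensor H (cd k H H i) ∘ₗ (TensorProduct.assoc k H H H).toLinearMap ∘ₗ
        rTensor H (Coalgebra.comul (R := k) (A := H)) := by
  apply TensorProduct.ext'
  intro p v
  simp only [coe_comp, Function.comp_apply, rTensor_tmul, LinearEquiv.coe_coe]
  rw [lTensor_cd_assoc, cd_tmul, map_smul]

lemma comul_Dk (i) (h : H) :
    Coalgebra.comul (R := k) (Dk k H i h) = lTensor H (Dk k H i) (Coalgebra.comul h) := by
  have h1 : Coalgebra.comul (R := k) (Dk k H i h) =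
      lTensor H (cd k H H i) ((TensorProduct.assoc k H H H)
        (rTensor H Coalgebra.comul (Coalgebra.comul h))) := by
    have := DFunLike.congr_fun (comul_comp_cd_comul (k := k) (H := H) i)
      (Coalgebra.comul (R := k) h)
    simpa [Dk] using this
  rw [h1, Coalgebra.coassoc_apply]
  rw [show (Dk k H i) = cd k H H i ∘ₗ Coalgebra.comul from rfl, lTensor_comp]
  simp

end Aux10

open Aux10

variable {k H A}

lemma delta_tmul (a : A) (h : H) :
    trivialCoaction k H A (a ⊗ₜ[k] h) =
      (TensorProduct.assoc k A H H).symm (a ⊗ₜ[k] Coalgebra.comul h) := by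
  simp [trivialCoaction]

lemma assoc_symm_tmul_mul (a b : A) (y z : H ⊗[k] H) :
    ((TensorProduct.assoc k A H H).symm (a ⊗ₜ[k] y)) *
      ((TensorProduct.assoc k A H H).symm (b ⊗ₜ[k] z)) =
      (TensorProduct.assoc k A H H).symm ((a * b) ⊗ₜ[k] (y * z)) := by
  induction y using TensorProduct.induction_on with
  | zero => simp
  | tmul p q =>
      induction z using TensorProduct.induction_on with
      | zero => simp
      | tmul r s =>
          simp [TensorProduct.assoc_symm_tmul, Algebra.TensorProduct.tmul_mul_tmul]
      | add z₁ z₂ h₁ h₂ => simp only [tmul_add, map_add, mul_add, h₁, h₂]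
  | add y₁ y₂ h₁ h₂ => simp only [tmul_add, map_add, add_mul, h₁, h₂]

lemma delta_mul (u v : A ⊗[k] H) :
    trivialCoaction k H A (u * v) = trivialCoaction k H A u * trivialCoaction k H A v := by
  induction u using TensorProduct.induction_on with
  | zero => simp
  | tmul a g =>
      induction v using TensorProduct.induction_on with
      | zero => simp
      | tmul b h =>
          rw [Algebra.TensorProduct.tmul_mul_tmul, delta_tmul, delta_tmul, delta_tmul,
            assoc_symm_tmul_mul, Bialgebra.comul_mul]
      | add v₁ v₂ h₁ h₂ => simp only [mul_add, map_add, h₁, h₂]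
  | add u₁ u₂ h₁ h₂ => simp only [add_mul, map_add, h₁, h₂]

variable {ρ : A →ₗ[k] A ⊗[k] H}

lemma rTensor_rho_mul (hρ : IsPartialCoaction k H A ρ) (u v : A ⊗[k] H) :
    LinearMap.rTensor H ρ (u * v) = LinearMap.rTensor H ρ u * LinearMap.rTensor H ρ v := by
  induction u using TensorProduct.induction_on with
  | zero => simp
  | tmul a g =>
      induction v using TensorProduct.induction_on with
      | zero => simp
      | tmul b h =>
          simp [Algebra.TensorProduct.tmul_mul_tmul, hρ.map_mul]
      | add v₁ v₂ h₁ h₂ => simp only [mul_add, map_add, h₁, h₂]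
  | add u₁ u₂ h₁ h₂ => simp only [add_mul, map_add, h₁, h₂]

lemma rTensor_rho_one :
    LinearMap.rTensor H ρ (1 : A ⊗[k] H) = ρ 1 ⊗ₜ[k] (1 : H) := by
  rw [Algebra.TensorProduct.one_def, LinearMap.rTensor_tmul]

/-- The counit evaluation `(A ⊗ H) ⊗ H → A ⊗ H` on the last tensor factor. -/
noncomputable def Emap : (A ⊗[k] H) ⊗[k] H →ₗ[k] A ⊗[k] H :=
  (TensorProduct.rid k (A ⊗[k] H)).toLinearMap ∘ₗ
    LinearMap.lTensor (A ⊗[k] H) (Coalgebra.counit (R := k) (A := H))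

lemma Emap_assoc_symm (a : A) (y : H ⊗[k] H) :
    Emap (k := k) ((TensorProduct.assoc k A H H).symm (a ⊗ₜ[k] y)) =
      a ⊗ₜ[k] (TensorProduct.rid k H (LinearMap.lTensor H (Coalgebra.counit (R := k)) y)) := by
  induction y using TensorProduct.induction_on with
  | zero => simp [Emap]
  | tmul p q => simp [Emap, TensorProduct.assoc_symm_tmul, tmul_smul]
  | add y₁ y₂ h₁ h₂ => simp only [tmul_add, map_add, h₁, h₂]

lemma Emap_delta (x : A ⊗[k] H) : Emap (k := k) (trivialCoaction k H A x) = x := by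
  induction x using TensorProduct.induction_on with
  | zero => simp
  | tmul a h =>
      rw [delta_tmul, Emap_assoc_symm]
      have : (Coalgebra.counit (R := k)).lTensor H (Coalgebra.comul h) = h ⊗ₜ[k] (1 : k) :=
        Coalgebra.lTensor_counit_comul h
      rw [this]
      simp
  | add x₁ x₂ h₁ h₂ => simp only [map_add, h₁, h₂]

lemma Emap_mul_left (v : A ⊗[k] H) (y : (A ⊗[k] H) ⊗[k] H) :
    Emap (k := k) ((v ⊗ₜ[k] (1 : H)) * y) = v * Emap (k := k) y := by
  induction y using TensorProduct.induction_on with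
  | zero => simp
  | tmul w h =>
      simp [Emap, Algebra.TensorProduct.tmul_mul_tmul, mul_smul_comm]
  | add y₁ y₂ h₁ h₂ => simp only [mul_add, map_add, h₁, h₂]

lemma Emap_rTensor (z : A ⊗[k] H) :
    Emap (k := k) (LinearMap.rTensor H ρ z) =
      ρ ((TensorProduct.rid k A) (LinearMap.lTensor A (Coalgebra.counit (R := k)) z)) := by
  induction z using TensorProduct.induction_on with
  | zero => simp
  | tmul a h => simp [Emap]
  | add z₁ z₂ h₁ h₂ => simp only [map_add, h₁, h₂]

lemma cd_assoc_symm (i) (a : A) (y : H ⊗[k] H) :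
    cd k H (A ⊗[k] H) i ((TensorProduct.assoc k A H H).symm (a ⊗ₜ[k] y)) =
      a ⊗ₜ[k] cd k H H i y := by
  induction y using TensorProduct.induction_on with
  | zero => simp
  | tmul p q => simp [TensorProduct.assoc_symm_tmul, cd_tmul, tmul_smul]
  | add y₁ y₂ h₁ h₂ => simp only [tmul_add, map_add, h₁, h₂]

lemma lTensor_assoc_symm (f : H →ₗ[k] H) (a : A) (y : H ⊗[k] H) :
    LinearMap.lTensor (A ⊗[k] H) f ((TensorProduct.assoc k A H H).symm (a ⊗ₜ[k] y)) =
      (TensorProduct.assoc k A H H).symm (a ⊗ₜ[k] LinearMap.lTensor H f y) := by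
  induction y using TensorProduct.induction_on with
  | zero => simp
  | tmul p q => simp [TensorProduct.assoc_symm_tmul]
  | add y₁ y₂ h₁ h₂ => simp only [tmul_add, map_add, h₁, h₂]

/-- Identity I1: `δ` of a component of `δ x` is computed by `Dk` on the last leg. -/
lemma delta_cd_delta (i) (x : A ⊗[k] H) :
    trivialCoaction k H A (cd k H (A ⊗[k] H) i (trivialCoaction k H A x)) =
      LinearMap.lTensor (A ⊗[k] H) (Dk k H i) (trivialCoaction k H A x) := by
  induction x using TensorProduct.induction_on with
  | zero => simp
  | tmul a h =>
      rw [delta_tmul, cd_assoc_symm, lTensor_assoc_symm, delta_tmul]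
      rw [show cd k H H i (Coalgebra.comul h) = Dk k H i h from rfl, comul_Dk]
  | add x₁ x₂ h₁ h₂ => simp only [map_add, h₁, h₂]

/-- Identity I3: left multiplication by `v ⊗ 1` commutes with `lTensor` on the last leg. -/
lemma mul_lTensor (v : A ⊗[k] H) (f : H →ₗ[k] H) (y : (A ⊗[k] H) ⊗[k] H) :
    (v ⊗ₜ[k] (1 : H)) * LinearMap.lTensor (A ⊗[k] H) f y =
      LinearMap.lTensor (A ⊗[k] H) f ((v ⊗ₜ[k] (1 : H)) * y) := by
  induction y using TensorProduct.induction_on with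
  | zero => simp
  | tmul w h => simp [Algebra.TensorProduct.tmul_mul_tmul]
  | add y₁ y₂ h₁ h₂ => simp only [mul_add, map_add, h₁, h₂]

/-- Identity I4: `lTensor` on the last leg commutes with `rTensor ρ`. -/
lemma lTensor_rTensor_rho (f : H →ₗ[k] H) (z : A ⊗[k] H) :
    LinearMap.lTensor (A ⊗[k] H) f (LinearMap.rTensor H ρ z) =
      LinearMap.rTensor H ρ (LinearMap.lTensor A f z) :=
  DFunLike.congr_fun
    ((LinearMap.lTensor_comp_rTensor (f := ρ) (g := f)).trans
      (LinearMap.rTensor_comp_lTensor (f := ρ) (g := f)).symm) z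

end Aux10

/-- **Key step of the globalization theorem for partial coactions.**  Let `(A, ρ̄)` be a
partial `H`-comodule algebra and `B` the smallest `H`-subcomodule subalgebra of
`(A ⊗ H, I ⊗ Δ)` containing `ρ̄(A)`.  Then `ρ̄(1_A) B ⊆ ρ̄(A)`; consequently `ρ̄(A)` is a
right ideal of `B` whose unity is the idempotent `ρ̄(1_A)`. -/
theorem unit_mul_B_subset
    (ρ : A →ₗ[k] A ⊗[k] H) (hρ : IsPartialCoaction k H A ρ)
    (B : NonUnitalSubalgebra k (A ⊗[k] H))
    (hBsub : IsSubcomoduleSubalg k H A B)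
    (hBA : Set.range ρ ⊆ (B : Set (A ⊗[k] H)))
    (hBmin : ∀ W : NonUnitalSubalgebra k (A ⊗[k] H),
      IsSubcomoduleSubalg k H A W → Set.range ρ ⊆ (W : Set (A ⊗[k] H)) → B ≤ W) :
    -- `ρ̄(1_A) B ⊆ ρ̄(A)`
    (∀ x ∈ B, ρ 1 * x ∈ Set.range ρ) ∧
    -- `ρ̄(1_A)` is an idempotent
    ρ 1 * ρ 1 = ρ 1 ∧
    -- consequently `ρ̄(A)` is a right ideal of `B` ...
    (∀ (a : A), ∀ x ∈ B, ρ a * x ∈ Set.range ρ) ∧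
    -- ... with unity `ρ̄(1_A)`
    (∀ a : A, ρ 1 * ρ a = ρ a ∧ ρ a * ρ 1 = ρ a) := by
  classical
  set L : A ⊗[k] H →ₗ[k] (A ⊗[k] H) ⊗[k] H :=
    (LinearMap.mulLeft k (ρ 1 ⊗ₜ[k] (1 : H))) ∘ₗ trivialCoaction k H A with hL
  have hLapp : ∀ x : A ⊗[k] H,
      L x = (ρ 1 ⊗ₜ[k] (1 : H)) * trivialCoaction k H A x := fun x => rfl
  set V : Submodule k (A ⊗[k] H) :=
    B.toSubmodule ⊓ Submodule.comap L (LinearMap.range (LinearMap.rTensor H ρ)) with hV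
  -- C implies ρ 1 * x ∈ range ρ
  have hkey : ∀ x : A ⊗[k] H,
      L x ∈ LinearMap.range (LinearMap.rTensor H ρ) → ρ 1 * x ∈ Set.range ρ := by
    intro x hx
    obtain ⟨z, hz⟩ := hx
    rw [hLapp] at hz
    have h1 : Emap (k := k) ((ρ 1 ⊗ₜ[k] (1 : H)) * trivialCoaction k H A x) = ρ 1 * x := by
      rw [Emap_mul_left, Emap_delta]
    have h2 := Emap_rTensor (ρ := ρ) z
    rw [hz, h1] at h2
    exact ⟨_, h2.symm⟩
  -- V is closed under multiplication
  have hVmul : ∀ x y : A ⊗[k] H, x ∈ V → y ∈ V → x * y ∈ V := by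
    intro x y hx hy
    obtain ⟨hxB, hxC⟩ := Submodule.mem_inf.mp hx
    obtain ⟨hyB, hyC⟩ := Submodule.mem_inf.mp hy
    obtain ⟨zx, hzx⟩ := Submodule.mem_comap.mp hxC
    obtain ⟨zy, hzy⟩ := Submodule.mem_comap.mp hyC
    rw [hLapp] at hzx hzy
    refine Submodule.mem_inf.mpr ⟨B.mul_mem hxB hyB, Submodule.mem_comap.mpr ⟨zx * zy, ?_⟩⟩
    rw [hLapp, rTensor_rho_mul hρ, delta_mul, ← mul_assoc, ← hzx]
    have hstab : LinearMap.rTensor H ρ zx * (ρ 1 ⊗ₜ[k] (1 : H)) = LinearMap.rTensor H ρ zx := by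
      rw [← rTensor_rho_one, ← rTensor_rho_mul hρ, mul_one]
    calc LinearMap.rTensor H ρ zx * LinearMap.rTensor H ρ zy
        = LinearMap.rTensor H ρ zx * ((ρ 1 ⊗ₜ[k] (1 : H)) * trivialCoaction k H A y) := by
          rw [hzy]
      _ = (LinearMap.rTensor H ρ zx * (ρ 1 ⊗ₜ[k] (1 : H))) * trivialCoaction k H A y := by
          rw [mul_assoc]
      _ = LinearMap.rTensor H ρ zx * trivialCoaction k H A y := by rw [hstab]
  set W : NonUnitalSubalgebra k (A ⊗[k] H) := V.toNonUnitalSubalgebra hVmul with hW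
  have hWmem : ∀ x : A ⊗[k] H, x ∈ W ↔ x ∈ V := fun x => Submodule.mem_toNonUnitalSubalgebra
  have hWsubmod : W.toSubmodule = V := Submodule.toNonUnitalSubalgebra_toSubmodule V hVmul
  -- ρ(A) ⊆ W
  have hrange : Set.range ρ ⊆ (W : Set (A ⊗[k] H)) := by
    rintro _ ⟨a, rfl⟩
    refine (hWmem _).mpr (Submodule.mem_inf.mpr
      ⟨hBA ⟨a, rfl⟩, Submodule.mem_comap.mpr ⟨ρ a, ?_⟩⟩)
    rw [hLapp, hρ.coassoc a]
    congr 1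
  -- W is a subcomodule subalgebra
  have hWsub : IsSubcomoduleSubalg k H A W := by
    intro w hw
    rw [Aux10.mem_range_rTensor_subtype_iff]
    intro i
    rw [NonUnitalSubalgebra.mem_toSubmodule, hWmem]
    obtain ⟨hwB, hwC⟩ := Submodule.mem_inf.mp ((hWmem w).mp hw)
    obtain ⟨zw, hzw⟩ := Submodule.mem_comap.mp hwC
    rw [hLapp] at hzw
    refine Submodule.mem_inf.mpr ⟨?_, Submodule.mem_comap.mpr ?_⟩
    · -- the component lies in B
      obtain ⟨y, hy⟩ := hBsub w hwB
      rw [← hy, Aux10.cd_natural]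
      exact (Aux10.cd k H B.toSubmodule i y).2
    · -- the component satisfies the condition C
      refine ⟨LinearMap.lTensor A (Aux10.Dk k H i) zw, ?_⟩
      rw [hLapp, delta_cd_delta, mul_lTensor, ← hzw, lTensor_rTensor_rho]
  -- minimality
  have hBW : B ≤ W := hBmin W hWsub hrange
  have part1 : ∀ x ∈ B, ρ 1 * x ∈ Set.range ρ := by
    intro x hx
    exact hkey x (Submodule.mem_inf.mp ((hWmem x).mp (hBW hx))).2
  have unit_left : ∀ a : A, ρ 1 * ρ a = ρ a := by
    intro a; rw [← hρ.map_mul, one_mul]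
  have unit_right : ∀ a : A, ρ a * ρ 1 = ρ a := by
    intro a; rw [← hρ.map_mul, mul_one]
  refine ⟨part1, ?_, ?_, fun a => ⟨unit_left a, unit_right a⟩⟩
  · rw [← hρ.map_mul, one_mul]
  · intro a x hx
    obtain ⟨b, hb⟩ := part1 x hx
    refine ⟨a * b, ?_⟩
    rw [hρ.map_mul, hb, ← mul_assoc, unit_right a]

end
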